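/- Let G be a compact subgroup of U(d) with Haar probability measure μ_G, write ω(g)(X) := U_g X U_g* for g ∈ G (U_g the unitary matrix of g), and let E_x := |x⟩⟨x| for the standard basis, x = 1,…,d. Assume that for every x there exists g ∈ G with U_g E_1 U_g* = E_x (the measurement basis is generated by gates from G acting on E_1). Let Q be a positive semidefinite linear operator on M_d(ℂ) ⊗ M_d(ℂ) (self-adjoint with nonnegative quadratic form for the Hilbert–Schmidt inner product) that commutes with ω(g) ⊗ ω(g) for every g ∈ G. Then the quantity Σ_{x=1}^d ∫_G ⟨E_1 ⊗ E_1, Q((U_g* E_x U_g) ⊗ (U_g* E_x U_g))⟩ · ⟨x| U_g E_1 U_g* |x⟩ dμ_G(g) is a nonnegative real number. (In particular this applies to Q = P_σ^{(2)} (S⁺)^{⊗2}, the product of an isotypic projector of ω⊗ω with the tensor square of the pseudoinverse of the frame operator, yielding tr(C_σ)_ideal ≥ 0 for every irrep σ.) -/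

import Mathlib

open MeasureTheory Matrix
open scoped Matrix.Norms.L2Operator Kronecker

namespace IdealSecondMomentAux

variable {n m : Type*} [Fintype n] [DecidableEq n] [Fintype m] [DecidableEq m]

/-- slice of a matrix over a product index type -/
def slice (A : Matrix (n × m) (n × m) ℂ) (i j : m) : Matrix n n ℂ :=
  Matrix.of fun a b => A (a, i) (b, j)

lemma slice_apply (A : Matrix (n × m) (n × m) ℂ) (i j : m) (a b : n) :
    slice A i j a b = A (a, i) (b, j) := rfl

lemma slice_add (A B : Matrix (n × m) (n × m) ℂ) (i j : m) :
    slice (A + B) i j = slice A i j + slice B i j := rfl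

lemma slice_smul (c : ℂ) (A : Matrix (n × m) (n × m) ℂ) (i j : m) :
    slice (c • A) i j = c • slice A i j := rfl

/-- the extension `Q ⊗ id` of a superoperator -/
noncomputable def matExt (Q : Matrix n n ℂ →ₗ[ℂ] Matrix n n ℂ) :
    Matrix (n × m) (n × m) ℂ →ₗ[ℂ] Matrix (n × m) (n × m) ℂ where
  toFun A := Matrix.of fun p q => Q (slice A p.2 q.2) p.1 q.1
  map_add' A B := by
    ext ⟨a, i⟩ ⟨b, j⟩
    simp [slice_add, Matrix.add_apply]
  map_smul' c A := by
    ext ⟨a, i⟩ ⟨b, j⟩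
    simp [slice_smul]

lemma matExt_apply (Q : Matrix n n ℂ →ₗ[ℂ] Matrix n n ℂ)
    (A : Matrix (n × m) (n × m) ℂ) (p q : n × m) :
    matExt Q A p q = Q (slice A p.2 q.2) p.1 q.1 := rfl

lemma slice_matExt (Q : Matrix n n ℂ →ₗ[ℂ] Matrix n n ℂ)
    (A : Matrix (n × m) (n × m) ℂ) (i j : m) :
    slice (matExt (m := m) Q A) i j = Q (slice A i j) := rfl

lemma trace_form {p : Type*} [Fintype p] (X Y : Matrix p p ℂ) :
    (Xᴴ * Y).trace = ∑ a, ∑ b, star (X b a) * Y b a := by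
  simp [Matrix.trace, Matrix.mul_apply, Matrix.diag, Matrix.conjTranspose_apply]

lemma sum4_comm {α β γ δ M : Type*} [AddCommMonoid M]
    [Fintype α] [Fintype β] [Fintype γ] [Fintype δ] (f : α → β → γ → δ → M) :
    ∑ a, ∑ i, ∑ b, ∑ j, f a i b j = ∑ j, ∑ i, ∑ a, ∑ b, f a i b j := by
  calc ∑ a, ∑ i, ∑ b, ∑ j, f a i b j
      = ∑ a, ∑ i, ∑ j, ∑ b, f a i b j :=
        Finset.sum_congr rfl fun a _ => Finset.sum_congr rfl fun i _ => Finset.sum_comm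
    _ = ∑ a, ∑ j, ∑ i, ∑ b, f a i b j :=
        Finset.sum_congr rfl fun a _ => Finset.sum_comm
    _ = ∑ j, ∑ a, ∑ i, ∑ b, f a i b j := Finset.sum_comm
    _ = ∑ j, ∑ i, ∑ a, ∑ b, f a i b j :=
        Finset.sum_congr rfl fun j _ => Finset.sum_comm

lemma trace_pair_decomp (A B : Matrix (n × m) (n × m) ℂ) :
    (Aᴴ * B).trace = ∑ j : m, ∑ i : m, ((slice A j i)ᴴ * slice B j i).trace := by
  simp only [trace_form, slice_apply, Fintype.sum_prod_type]
  exact sum4_comm _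

lemma trace_matExt_decomp (Q : Matrix n n ℂ →ₗ[ℂ] Matrix n n ℂ)
    (A B : Matrix (n × m) (n × m) ℂ) :
    (Aᴴ * matExt (m := m) Q B).trace
      = ∑ j : m, ∑ i : m, ((slice A j i)ᴴ * Q (slice B j i)).trace := by
  rw [trace_pair_decomp]
  simp only [slice_matExt]

lemma kron_conjTranspose {n' m' : Type*} (A : Matrix n n' ℂ) (B : Matrix m m' ℂ) :
    (A ⊗ₖ B)ᴴ = Aᴴ ⊗ₖ Bᴴ := by
  ext ⟨a, i⟩ ⟨b, j⟩
  simp [Matrix.conjTranspose_apply, Matrix.kroneckerMap_apply, mul_comm]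

lemma slice_kron (A : Matrix n n ℂ) (C : Matrix m m ℂ) (i j : m) :
    slice (A ⊗ₖ C) i j = C i j • A := by
  ext a b
  simp [slice_apply, Matrix.kroneckerMap_apply, mul_comm]

lemma matExt_kron (Q : Matrix n n ℂ →ₗ[ℂ] Matrix n n ℂ)
    (A : Matrix n n ℂ) (C : Matrix m m ℂ) :
    matExt Q (A ⊗ₖ C) = Q A ⊗ₖ C := by
  ext ⟨a, i⟩ ⟨b, j⟩
  simp [matExt_apply, slice_kron, Matrix.kroneckerMap_apply, mul_comm]

lemma stdBasis_kron (c e : n) (k l : m) (x : ℂ) :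
    Matrix.single (c, k) (e, l) x
      = Matrix.single c e x ⊗ₖ Matrix.single k l (1 : ℂ) := by
  ext ⟨a, i⟩ ⟨b, j⟩
  simp only [Matrix.single, Matrix.of_apply, Matrix.kroneckerMap_apply,
    Prod.mk.injEq]
  by_cases h1 : c = a <;> by_cases h2 : e = b <;> by_cases h3 : k = i <;>
    by_cases h4 : l = j <;> simp [h1, h2, h3, h4]

lemma matExt_conjAd (Q : Matrix n n ℂ →ₗ[ℂ] Matrix n n ℂ)
    (V : Matrix n n ℂ) (u : Matrix m m ℂ)
    (hQV : ∀ A, Q (V * A * Vᴴ) = V * Q A * Vᴴ)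
    (A : Matrix (n × m) (n × m) ℂ) :
    matExt (m := m) Q ((V ⊗ₖ u) * A * (V ⊗ₖ u)ᴴ)
      = (V ⊗ₖ u) * matExt (m := m) Q A * (V ⊗ₖ u)ᴴ := by
  induction A using Matrix.induction_on' with
  | h_zero => simp
  | h_add P R hP hR =>
      simp only [Matrix.mul_add, Matrix.add_mul, map_add, hP, hR]
  | h_std_basis i j x =>
      rcases i with ⟨c, k⟩
      rcases j with ⟨e, l⟩
      rw [stdBasis_kron, kron_conjTranspose, ← Matrix.mul_kronecker_mul,
        ← Matrix.mul_kronecker_mul, matExt_kron, hQV, matExt_kron,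
        Matrix.mul_kronecker_mul, Matrix.mul_kronecker_mul]

lemma conj_trace_pair {p : Type*} [Fintype p] (X Y : Matrix p p ℂ) :
    star ((Xᴴ * Y).trace) = (Yᴴ * X).trace := by
  rw [← Matrix.trace_conjTranspose, Matrix.conjTranspose_mul,
    Matrix.conjTranspose_conjTranspose]

/-- the trace-pairing linear functional `M ↦ tr(Bᴴ M)` -/
noncomputable def traceFormL {p : Type*} [Fintype p] (B : Matrix p p ℂ) :
    Matrix p p ℂ →ₗ[ℂ] ℂ where
  toFun M := (Bᴴ * M).trace
  map_add' M N := by simp [Matrix.mul_add]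
  map_smul' c M := by simp [Matrix.mul_smul]

lemma traceFormL_apply {p : Type*} [Fintype p] (B M : Matrix p p ℂ) :
    traceFormL B M = (Bᴴ * M).trace := rfl

/-- linear functionals commute with entrywise integration -/
lemma linMap_integral {κ : Type*} [Fintype κ] [DecidableEq κ]
    {G : Type*} [MeasurableSpace G] (ν : Measure G)
    (φ : Matrix κ κ ℂ →ₗ[ℂ] ℂ) (F : G → Matrix κ κ ℂ)
    (hF : ∀ p q, Integrable (fun g => F g p q) ν) :
    φ (Matrix.of fun p q => ∫ g, F g p q ∂ν) = ∫ g, φ (F g) ∂ν := by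
  have key : ∀ M : Matrix κ κ ℂ,
      φ M = ∑ p : κ, ∑ q : κ, M p q * φ (Matrix.single p q 1) := by
    intro M
    conv_lhs => rw [Matrix.matrix_eq_sum_single M]
    rw [map_sum]
    refine Finset.sum_congr rfl fun p _ => ?_
    rw [map_sum]
    refine Finset.sum_congr rfl fun q _ => ?_
    rw [show Matrix.single p q (M p q) = M p q • Matrix.single p q 1 by
      rw [Matrix.smul_single, smul_eq_mul, mul_one], LinearMap.map_smul, smul_eq_mul]
  rw [key]
  have h2 : ∀ g, φ (F g) = ∑ p : κ, ∑ q : κ, F g p q * φ (Matrix.single p q 1) :=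
    fun g => key _
  calc ∑ p : κ, ∑ q : κ,
        (Matrix.of fun p q => ∫ g, F g p q ∂ν) p q * φ (Matrix.single p q 1)
      = ∑ p : κ, ∑ q : κ, ∫ g, F g p q * φ (Matrix.single p q 1) ∂ν := by
        refine Finset.sum_congr rfl fun p _ => Finset.sum_congr rfl fun q _ => ?_
        rw [Matrix.of_apply, integral_mul_const]
    _ = ∫ g, ∑ p : κ, ∑ q : κ, F g p q * φ (Matrix.single p q 1) ∂ν := by
        rw [integral_finset_sum]
        · exact Finset.sum_congr rfl fun p _ => (integral_finset_sum _
            fun q _ => (hF p q).mul_const _).symm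
        · exact fun p _ => integrable_finset_sum _ fun q _ => (hF p q).mul_const _
    _ = ∫ g, φ (F g) ∂ν := by simp_rw [h2]

lemma matExt_selfAdj (Q : Matrix n n ℂ →ₗ[ℂ] Matrix n n ℂ)
    (hQ : ∀ A B : Matrix n n ℂ, ((Q A)ᴴ * B).trace = (Aᴴ * Q B).trace)
    (A B : Matrix (n × m) (n × m) ℂ) :
    ((matExt (m := m) Q A)ᴴ * B).trace = (Aᴴ * matExt (m := m) Q B).trace := by
  rw [trace_pair_decomp, trace_matExt_decomp]
  exact Finset.sum_congr rfl fun j _ => Finset.sum_congr rfl fun i _ => by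
    rw [slice_matExt]; exact hQ _ _

lemma matExt_nonneg (Q : Matrix n n ℂ →ₗ[ℂ] Matrix n n ℂ)
    (hQ : ∀ A : Matrix n n ℂ, 0 ≤ ((Aᴴ * Q A).trace).re)
    (A : Matrix (n × m) (n × m) ℂ) :
    0 ≤ ((Aᴴ * matExt (m := m) Q A).trace).re := by
  rw [trace_matExt_decomp, Complex.re_sum]
  refine Finset.sum_nonneg fun j _ => ?_
  rw [Complex.re_sum]
  exact Finset.sum_nonneg fun i _ => hQ _

lemma trace_conj_pair_move {p : Type*} [Fintype p] (V X Z : Matrix p p ℂ) :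
    (Xᴴ * (Vᴴ * Z * V)).trace = ((V * X * Vᴴ)ᴴ * Z).trace := by
  have h1 : (V * X * Vᴴ)ᴴ = V * Xᴴ * Vᴴ := by
    simp only [Matrix.conjTranspose_mul, Matrix.conjTranspose_conjTranspose,
      Matrix.mul_assoc]
  rw [h1,
    show Xᴴ * (Vᴴ * Z * V) = Xᴴ * (Vᴴ * Z) * V by simp only [Matrix.mul_assoc],
    Matrix.trace_mul_comm]
  simp only [Matrix.mul_assoc]

lemma trace_kron_pair {p q : Type*} [Fintype p] [Fintype q] [DecidableEq p] [DecidableEq q]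
    (X Z : Matrix p p ℂ) (Y W : Matrix q q ℂ) :
    ((X ⊗ₖ Y)ᴴ * (Z ⊗ₖ W)).trace = (Xᴴ * Z).trace * (Yᴴ * W).trace := by
  rw [kron_conjTranspose, ← Matrix.mul_kronecker_mul, Matrix.trace_kronecker]

end IdealSecondMomentAux

open IdealSecondMomentAux in
/-- **Non-negativity of the ideal second-moment coefficients `tr(C_σ)_ideal`.**
Let `G` be a compact group with Haar probability measure `ν`, acting on `M_d(ℂ)` by
conjugation with unitaries `U_g`, and suppose the computational basis projectors
`E_x = |x⟩⟨x|` are generated by gates of `G` acting on `E_1`.  If `Q` is a positive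
semidefinite superoperator on `M_d(ℂ) ⊗ M_d(ℂ)` (self-adjoint with nonnegative quadratic
form for the Hilbert–Schmidt inner product) commuting with `ω(g) ⊗ ω(g)` for all `g`,
then `Σ_x ∫_G ⟨E₁⊗E₁, Q((U_g* E_x U_g) ⊗ (U_g* E_x U_g))⟩ · ⟨x|U_g E₁ U_g*|x⟩ dν(g)` is
a nonnegative real number. -/
theorem ideal_second_moment_coefficient_nonneg
    (d : ℕ) [NeZero d]
    {G : Type*} [Group G] [TopologicalSpace G] [IsTopologicalGroup G] [CompactSpace G]
    [MeasurableSpace G] [BorelSpace G]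
    (ν : Measure G) [ν.IsHaarMeasure] [IsProbabilityMeasure ν]
    (U : G → Matrix (Fin d) (Fin d) ℂ)
    (hU_cont : Continuous U)
    (hU_one : U 1 = 1)
    (hU_mul : ∀ g h : G, U (g * h) = U g * U h)
    (hU_unitary : ∀ g : G, U g ∈ Matrix.unitaryGroup (Fin d) ℂ)
    -- the measurement basis is generated by gates from G acting on E₁
    (hgen : ∀ x : Fin d, ∃ g : G,
      U g * Matrix.single (0 : Fin d) (0 : Fin d) (1 : ℂ) * (U g)ᴴ
        = Matrix.single x x (1 : ℂ))
    -- Q : a positive semidefinite superoperator on M_d(ℂ) ⊗ M_d(ℂ)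
    (Q : Matrix (Fin d × Fin d) (Fin d × Fin d) ℂ
          →ₗ[ℂ] Matrix (Fin d × Fin d) (Fin d × Fin d) ℂ)
    (hQ_selfAdjoint : ∀ A B : Matrix (Fin d × Fin d) (Fin d × Fin d) ℂ,
      ((Q A)ᴴ * B).trace = (Aᴴ * Q B).trace)
    (hQ_nonneg : ∀ A : Matrix (Fin d × Fin d) (Fin d × Fin d) ℂ,
      0 ≤ ((Aᴴ * Q A).trace).re)
    -- Q commutes with ω(g) ⊗ ω(g) for every g ∈ G
    (hQ_comm : ∀ (g : G) (A : Matrix (Fin d × Fin d) (Fin d × Fin d) ℂ),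
      Q ((U g ⊗ₖ U g) * A * (U g ⊗ₖ U g)ᴴ)
        = (U g ⊗ₖ U g) * Q A * (U g ⊗ₖ U g)ᴴ) :
    0 ≤ (∑ x : Fin d, ∫ g,
          ((Matrix.single (0 : Fin d) (0 : Fin d) (1 : ℂ) ⊗ₖ
              Matrix.single (0 : Fin d) (0 : Fin d) (1 : ℂ))ᴴ *
            Q (((U g)ᴴ * Matrix.single x x (1 : ℂ) * U g) ⊗ₖ
                ((U g)ᴴ * Matrix.single x x (1 : ℂ) * U g))).trace *
          ((U g * Matrix.single (0 : Fin d) (0 : Fin d) (1 : ℂ) * (U g)ᴴ) x x)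
            ∂ν).re ∧
    (∑ x : Fin d, ∫ g,
          ((Matrix.single (0 : Fin d) (0 : Fin d) (1 : ℂ) ⊗ₖ
              Matrix.single (0 : Fin d) (0 : Fin d) (1 : ℂ))ᴴ *
            Q (((U g)ᴴ * Matrix.single x x (1 : ℂ) * U g) ⊗ₖ
                ((U g)ᴴ * Matrix.single x x (1 : ℂ) * U g))).trace *
          ((U g * Matrix.single (0 : Fin d) (0 : Fin d) (1 : ℂ) * (U g)ᴴ) x x)
            ∂ν).im = 0 := by
  classical
  -- unitarity facts
  have hUdag : ∀ g : G, (U g)ᴴ * U g = 1 := by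
    intro g
    have h := (Unitary.mem_iff.mp (hU_unitary g)).1
    simpa [Matrix.star_eq_conjTranspose] using h
  have hUinv : ∀ g : G, U g⁻¹ = (U g)ᴴ := by
    intro g
    have h1 : U g * U g⁻¹ = 1 := by rw [← hU_mul]; simp [hU_one]
    have h2 : (U g)ᴴ * (U g * U g⁻¹) = (U g)ᴴ * 1 := by rw [h1]
    rwa [← Matrix.mul_assoc, hUdag, Matrix.one_mul, Matrix.mul_one] at h2
  -- trace against a diagonal basis projector
  have htrE : ∀ (M : Matrix (Fin d) (Fin d) ℂ) (x : Fin d),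
      (M * Matrix.single x x (1 : ℂ)).trace = M x x := by
    intro M x
    rw [Matrix.trace, Finset.sum_eq_single x]
    · simp [Matrix.diag, Matrix.mul_apply, Matrix.single]
    · intro b _ hb
      simp [Matrix.diag, Matrix.mul_apply, Matrix.single, Ne.symm hb]
    · simp
  -- abbreviations
  set E1 : Matrix (Fin d) (Fin d) ℂ :=
    Matrix.single (0 : Fin d) (0 : Fin d) (1 : ℂ) with hE1def
  have hE1H : E1ᴴ = E1 := by
    rw [hE1def]
    ext a b
    simp [Matrix.conjTranspose_apply, Matrix.single, and_comm, apply_ite]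
  have htrE0 : ∀ M : Matrix (Fin d) (Fin d) ℂ, (M * E1).trace = M 0 0 := by
    intro M; rw [hE1def]; exact htrE M 0
  set R : G → Matrix ((Fin d × Fin d) × Fin d) ((Fin d × Fin d) × Fin d) ℂ :=
    fun g => (U g ⊗ₖ U g) ⊗ₖ U g with hRdef
  set w : Matrix ((Fin d × Fin d) × Fin d) ((Fin d × Fin d) × Fin d) ℂ :=
    (E1 ⊗ₖ E1) ⊗ₖ E1 with hwdef
  set F : G → Matrix ((Fin d × Fin d) × Fin d) ((Fin d × Fin d) × Fin d) ℂ :=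
    fun g => R g * w * (R g)ᴴ with hFdef
  set mI : Matrix ((Fin d × Fin d) × Fin d) ((Fin d × Fin d) × Fin d) ℂ :=
    Matrix.of fun p q => ∫ g, F g p q ∂ν with hmIdef
  -- continuity and integrability
  have hUentry : ∀ i j : Fin d, Continuous fun g => U g i j := fun i j =>
    (continuous_apply j).comp ((continuous_apply i).comp hU_cont)
  have hRcont : Continuous R := by
    rw [hRdef]
    apply continuous_matrix
    rintro ⟨⟨a, b⟩, c⟩ ⟨⟨a', b'⟩, c'⟩
    simp only [Matrix.kroneckerMap_apply]
    exact ((hUentry a a').mul (hUentry b b')).mul (hUentry c c')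
  have hFcont : Continuous F := by
    rw [hFdef]
    exact (hRcont.matrix_mul continuous_const).matrix_mul hRcont.matrix_conjTranspose
  have hFint : ∀ p q, Integrable (fun g => F g p q) ν := fun p q =>
    Continuous.integrable_of_hasCompactSupport
      ((continuous_apply q).comp ((continuous_apply p).comp hFcont))
      (HasCompactSupport.of_compactSpace _)
  -- linear functionals commute with the entrywise integral defining mI
  have hswap : ∀ φ : Matrix ((Fin d × Fin d) × Fin d) ((Fin d × Fin d) × Fin d) ℂ →ₗ[ℂ] ℂ,
      φ mI = ∫ g, φ (F g) ∂ν := by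
    intro φ
    rw [hmIdef]
    exact linMap_integral ν φ F hFint
  have hIntTr : ∀ B : Matrix ((Fin d × Fin d) × Fin d) ((Fin d × Fin d) × Fin d) ℂ,
      (∫ g, ((F g)ᴴ * B).trace ∂ν) = (mIᴴ * B).trace := by
    intro B
    have h1 : ∀ g : G, ((F g)ᴴ * B).trace = starRingEnd ℂ ((Bᴴ * F g).trace) := by
      intro g; rw [starRingEnd_apply, conj_trace_pair]
    have h2 := hswap (traceFormL B)
    simp only [traceFormL_apply] at h2
    calc (∫ g, ((F g)ᴴ * B).trace ∂ν)
        = ∫ g, starRingEnd ℂ ((Bᴴ * F g).trace) ∂ν := by simp_rw [h1]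
      _ = starRingEnd ℂ (∫ g, (Bᴴ * F g).trace ∂ν) := integral_conj
      _ = starRingEnd ℂ ((Bᴴ * mI).trace) := by rw [← h2]
      _ = (mIᴴ * B).trace := by rw [starRingEnd_apply, conj_trace_pair]
  -- invariance of mI
  have hRmul : ∀ k g : G, R (k * g) = R k * R g := by
    intro k g
    simp only [hRdef]
    rw [hU_mul, Matrix.mul_kronecker_mul, Matrix.mul_kronecker_mul]
  have hFshift : ∀ k g : G, F (k * g) = R k * F g * (R k)ᴴ := by
    intro k g
    simp only [hFdef]
    rw [hRmul, Matrix.conjTranspose_mul]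
    simp only [Matrix.mul_assoc]
  have hminv : ∀ k : G, R k * mI * (R k)ᴴ = mI := by
    intro k
    ext p q
    let φ : Matrix ((Fin d × Fin d) × Fin d) ((Fin d × Fin d) × Fin d) ℂ →ₗ[ℂ] ℂ :=
      { toFun := fun M => (R k * M * (R k)ᴴ) p q
        map_add' := by intro a b; simp [Matrix.mul_add, Matrix.add_mul]
        map_smul' := by intro c a; simp [Matrix.mul_smul, Matrix.smul_mul] }
    have h1 : (R k * mI * (R k)ᴴ) p q = φ mI := rfl
    rw [h1, hswap φ]
    calc (∫ g, φ (F g) ∂ν)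
        = ∫ g, F (k * g) p q ∂ν := by
          refine integral_congr_ae (Filter.Eventually.of_forall fun g => ?_)
          show φ (F g) = F (k * g) p q
          rw [hFshift k g]; rfl
      _ = ∫ g, F g p q ∂ν := integral_mul_left_eq_self (fun g => F g p q) k
      _ = mI p q := by simp [hmIdef]
  have hminv' : ∀ k : G, (R k)ᴴ * mI * R k = mI := by
    intro k
    have hRinv : R k⁻¹ = (R k)ᴴ := by
      simp only [hRdef]
      rw [hUinv k, ← kron_conjTranspose, ← kron_conjTranspose]
    have h := hminv k⁻¹
    rwa [hRinv, Matrix.conjTranspose_conjTranspose] at h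
  -- commutation of the extended superoperator
  have hQeComm : ∀ g : G, matExt (m := Fin d) Q (F g) = R g * matExt (m := Fin d) Q w * (R g)ᴴ := by
    intro g
    simp only [hFdef, hRdef]
    exact matExt_conjAd Q (U g ⊗ₖ U g) (U g) (hQ_comm g) _
  -- the key identity tr(mᴴ Q̃ w) = tr(mᴴ Q̃ m)
  have hfinal : (mIᴴ * matExt (m := Fin d) Q w).trace
      = (mIᴴ * matExt (m := Fin d) Q mI).trace := by
    have h1 := hswap (traceFormL mI ∘ₗ matExt (m := Fin d) Q)
    simp only [LinearMap.coe_comp, Function.comp_apply, traceFormL_apply] at h1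
    rw [h1]
    have h2 : ∀ g : G, (mIᴴ * matExt (m := Fin d) Q (F g)).trace
        = (mIᴴ * matExt (m := Fin d) Q w).trace := by
      intro g
      rw [hQeComm g]
      have e1 : (mIᴴ * (R g * matExt (m := Fin d) Q w * (R g)ᴴ)).trace
          = ((((R g)ᴴ * mI * R g)ᴴ) * matExt (m := Fin d) Q w).trace := by
        rw [show mIᴴ * (R g * matExt (m := Fin d) Q w * (R g)ᴴ)
              = (mIᴴ * (R g * matExt (m := Fin d) Q w)) * (R g)ᴴ by
            simp only [Matrix.mul_assoc], Matrix.trace_mul_comm]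
        congr 1
        simp only [Matrix.conjTranspose_mul, Matrix.conjTranspose_conjTranspose,
          Matrix.mul_assoc]
      rw [e1, hminv' g]
    rw [integral_congr_ae (Filter.Eventually.of_forall h2), integral_const]
    simp
  -- realness and non-negativity of z
  set z : ℂ := (mIᴴ * matExt (m := Fin d) Q mI).trace with hzdef
  have hz_im : z.im = 0 := by
    rw [← Complex.conj_eq_iff_im]
    rw [hzdef, starRingEnd_apply, conj_trace_pair]
    exact matExt_selfAdj Q hQ_selfAdjoint mI mI
  have hz_re : 0 ≤ z.re := matExt_nonneg Q hQ_nonneg mI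
  -- pointwise identity at x = 0
  have hρ00 : ∀ g : G, (U g * E1 * (U g)ᴴ) 0 0
      = ((U g * E1 * (U g)ᴴ)ᴴ * E1).trace := by
    intro g
    have hH : (U g * E1 * (U g)ᴴ)ᴴ = U g * E1 * (U g)ᴴ := by
      simp only [Matrix.conjTranspose_mul, Matrix.conjTranspose_conjTranspose, hE1H,
        Matrix.mul_assoc]
    rw [hH, htrE0]
  have hpoint : ∀ g : G,
      ((E1 ⊗ₖ E1)ᴴ * Q (((U g)ᴴ * E1 * U g) ⊗ₖ ((U g)ᴴ * E1 * U g))).trace *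
        ((U g * E1 * (U g)ᴴ) 0 0)
      = ((F g)ᴴ * matExt (m := Fin d) Q w).trace := by
    intro g
    have hk1 : ((U g)ᴴ * E1 * U g) ⊗ₖ ((U g)ᴴ * E1 * U g)
        = (U g ⊗ₖ U g)ᴴ * (E1 ⊗ₖ E1) * (U g ⊗ₖ U g) := by
      rw [kron_conjTranspose, ← Matrix.mul_kronecker_mul, ← Matrix.mul_kronecker_mul]
    have hQc : Q (((U g)ᴴ * E1 * U g) ⊗ₖ ((U g)ᴴ * E1 * U g))
        = (U g ⊗ₖ U g)ᴴ * Q (E1 ⊗ₖ E1) * (U g ⊗ₖ U g) := by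
      have h := hQ_comm g⁻¹ (E1 ⊗ₖ E1)
      rw [hUinv g, ← kron_conjTranspose, Matrix.conjTranspose_conjTranspose] at h
      rw [hk1, h]
    rw [hQc, hρ00 g, trace_conj_pair_move]
    have hFg : F g = ((U g ⊗ₖ U g) * (E1 ⊗ₖ E1) * (U g ⊗ₖ U g)ᴴ) ⊗ₖ (U g * E1 * (U g)ᴴ) := by
      simp only [hFdef, hRdef, hwdef]
      rw [kron_conjTranspose, ← Matrix.mul_kronecker_mul, ← Matrix.mul_kronecker_mul]
    have hC : matExt (m := Fin d) Q w = Q (E1 ⊗ₖ E1) ⊗ₖ E1 := by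
      rw [hwdef]; exact matExt_kron Q _ _
    rw [hFg, hC, trace_kron_pair]
  -- conjugation of basis projectors
  have hEx' : ∀ (x : Fin d) (h : G),
      U h * E1 * (U h)ᴴ = Matrix.single x x (1 : ℂ) →
      (U h)ᴴ * Matrix.single x x (1 : ℂ) * U h = E1 := by
    intro x h hx
    rw [← hx]
    simp only [Matrix.mul_assoc]
    rw [hUdag h, Matrix.mul_one, ← Matrix.mul_assoc, hUdag h, Matrix.one_mul]
  have hconjEntry : ∀ (x : Fin d) (h : G),
      U h * E1 * (U h)ᴴ = Matrix.single x x (1 : ℂ) →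
      ∀ M : Matrix (Fin d) (Fin d) ℂ, (U h * M * (U h)ᴴ) x x = M 0 0 := by
    intro x h hx M
    have h1 : (U h * M * (U h)ᴴ) x x
        = ((U h * M * (U h)ᴴ) * Matrix.single x x (1 : ℂ)).trace := (htrE _ x).symm
    rw [h1,
      show (U h * M * (U h)ᴴ) * Matrix.single x x (1 : ℂ)
          = U h * (M * ((U h)ᴴ * Matrix.single x x (1 : ℂ))) by
        simp only [Matrix.mul_assoc],
      Matrix.trace_mul_comm,
      show M * ((U h)ᴴ * Matrix.single x x (1 : ℂ)) * U h
          = M * ((U h)ᴴ * Matrix.single x x (1 : ℂ) * U h) by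
        simp only [Matrix.mul_assoc],
      hEx' x h hx, htrE0]
  -- each x-term equals z
  have hx_term : ∀ x : Fin d,
      (∫ g, ((E1 ⊗ₖ E1)ᴴ *
            Q (((U g)ᴴ * Matrix.single x x (1 : ℂ) * U g) ⊗ₖ
                ((U g)ᴴ * Matrix.single x x (1 : ℂ) * U g))).trace *
          ((U g * E1 * (U g)ᴴ) x x) ∂ν) = z := by
    intro x
    obtain ⟨h, hx⟩ := hgen x
    rw [hE1def] at hx ⊢
    rw [← hE1def] at hx ⊢
    rw [← integral_mul_left_eq_self (fun g =>
      ((E1 ⊗ₖ E1)ᴴ *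
          Q (((U g)ᴴ * Matrix.single x x (1 : ℂ) * U g) ⊗ₖ
              ((U g)ᴴ * Matrix.single x x (1 : ℂ) * U g))).trace *
        ((U g * E1 * (U g)ᴴ) x x)) h]
    have hpt : ∀ g : G,
        ((E1 ⊗ₖ E1)ᴴ *
            Q (((U (h * g))ᴴ * Matrix.single x x (1 : ℂ) * U (h * g)) ⊗ₖ
                ((U (h * g))ᴴ * Matrix.single x x (1 : ℂ) * U (h * g)))).trace *
          ((U (h * g) * E1 * (U (h * g))ᴴ) x x)
        = ((F g)ᴴ * matExt (m := Fin d) Q w).trace := by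
      intro g
      have hA : (U (h * g))ᴴ * Matrix.single x x (1 : ℂ) * U (h * g)
          = (U g)ᴴ * E1 * U g := by
        rw [hU_mul, Matrix.conjTranspose_mul,
          show (U g)ᴴ * (U h)ᴴ * Matrix.single x x (1 : ℂ) * (U h * U g)
              = (U g)ᴴ * ((U h)ᴴ * Matrix.single x x (1 : ℂ) * U h) * U g by
            simp only [Matrix.mul_assoc],
          hEx' x h hx]
      have hB : (U (h * g) * E1 * (U (h * g))ᴴ) x x = (U g * E1 * (U g)ᴴ) 0 0 := by
        rw [hU_mul, Matrix.conjTranspose_mul,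
          show U h * U g * E1 * ((U g)ᴴ * (U h)ᴴ)
              = U h * (U g * E1 * (U g)ᴴ) * (U h)ᴴ by simp only [Matrix.mul_assoc]]
        exact hconjEntry x h hx _
      rw [hA, hB]
      exact hpoint g
    rw [integral_congr_ae (Filter.Eventually.of_forall hpt), hIntTr, hfinal]
  -- assemble
  have hsumz : (∑ x : Fin d, ∫ g,
        ((E1 ⊗ₖ E1)ᴴ *
            Q (((U g)ᴴ * Matrix.single x x (1 : ℂ) * U g) ⊗ₖ
                ((U g)ᴴ * Matrix.single x x (1 : ℂ) * U g))).trace *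
          ((U g * E1 * (U g)ᴴ) x x) ∂ν) = (d : ℂ) * z := by
    rw [Finset.sum_congr rfl fun x _ => hx_term x]
    simp [Finset.sum_const, Finset.card_univ, nsmul_eq_mul]
  rw [hsumz]
  constructor
  · have h : ((d : ℂ) * z).re = (d : ℝ) * z.re := by
      simp [Complex.mul_re, hz_im]
    rw [h]
    exact mul_nonneg (Nat.cast_nonneg d) hz_re
  · have h : ((d : ℂ) * z).im = (d : ℝ) * z.im := by
      simp [Complex.mul_im]
    rw [h, hz_im, mul_zero]
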